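/- arXiv:2312.07563 — 5 statements merged into one kernel-verified Lean document; each statement's English description precedes it below -/
import Mathlib

section
/- Let U, V, W be finite-dimensional real inner product spaces and let f : U → V and g : V → W be linear maps with g ∘ f = 0. Then the kernel of the operator g* ∘ g + f ∘ f* : V → V is isomorphic (as a vector space) to the quotient ker g / im f. -/
open FiniteDimensional Module

theorem aux_ker_eq
    {U V W : Type*}
    [NormedAddCommGroup U] [InnerProductSpace ℝ U] [FiniteDimensional ℝ U]
    [NormedAddCommGroup V] [InnerProductSpace ℝ V] [FiniteDimensional ℝ V]
    [NormedAddCommGroup W] [InnerProductSpace ℝ W] [FiniteDimensional ℝ W]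
    (f : U →ₗ[ℝ] V) (g : V →ₗ[ℝ] W) :
    LinearMap.ker (LinearMap.adjoint g ∘ₗ g + f ∘ₗ LinearMap.adjoint f)
      = LinearMap.ker g ⊓ (LinearMap.range f)ᗮ := by
  ext v
  simp only [LinearMap.mem_ker, LinearMap.add_apply, LinearMap.comp_apply,
    Submodule.mem_inf, Submodule.mem_orthogonal]
  constructor
  · intro h
    have hin : (inner ℝ (LinearMap.adjoint g (g v) + f (LinearMap.adjoint f v)) v : ℝ) = 0 := by
      rw [h]; simp
    rw [inner_add_left, LinearMap.adjoint_inner_left] at hin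
    have h2 : (inner ℝ (f (LinearMap.adjoint f v)) v : ℝ) = inner ℝ (LinearMap.adjoint f v) (LinearMap.adjoint f v) := by
      rw [LinearMap.adjoint_inner_right]
    rw [h2] at hin
    have hg : g v = 0 := by
      have := real_inner_self_nonneg (x := g v)
      have := real_inner_self_nonneg (x := LinearMap.adjoint f v)
      have hgz : (inner ℝ (g v) (g v) : ℝ) = 0 := by linarith
      exact inner_self_eq_zero.mp hgz
    have hf : LinearMap.adjoint f v = 0 := by
      have := real_inner_self_nonneg (x := g v)
      have := real_inner_self_nonneg (x := LinearMap.adjoint f v)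
      have hfz : (inner ℝ (LinearMap.adjoint f v) (LinearMap.adjoint f v) : ℝ) = 0 := by linarith
      exact inner_self_eq_zero.mp hfz
    refine ⟨hg, fun u hu => ?_⟩
    obtain ⟨x, rfl⟩ := hu
    rw [real_inner_comm, ← LinearMap.adjoint_inner_left, hf, inner_zero_left]
  · rintro ⟨hg, ho⟩
    have hf : LinearMap.adjoint f v = 0 := by
      rw [← inner_self_eq_zero (𝕜 := ℝ), LinearMap.adjoint_inner_right]
      exact ho _ ⟨_, rfl⟩
    rw [hg, hf, map_zero, map_zero, add_zero]

/-- For finite-dimensional real inner product spaces `U, V, W` and linear maps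
`f : U → V`, `g : V → W` with `g ∘ f = 0`, the kernel of the Hodge Laplacian
`g* ∘ g + f ∘ f* : V → V` is isomorphic to the quotient `ker g / im f`. -/
theorem kernel_laplacian_iso_homology
    {U V W : Type*}
    [NormedAddCommGroup U] [InnerProductSpace ℝ U] [FiniteDimensional ℝ U]
    [NormedAddCommGroup V] [InnerProductSpace ℝ V] [FiniteDimensional ℝ V]
    [NormedAddCommGroup W] [InnerProductSpace ℝ W] [FiniteDimensional ℝ W]
    (f : U →ₗ[ℝ] V) (g : V →ₗ[ℝ] W) (hgf : g ∘ₗ f = 0) :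
    Nonempty
      ((LinearMap.ker (LinearMap.adjoint g ∘ₗ g + f ∘ₗ LinearMap.adjoint f)) ≃ₗ[ℝ]
        ((LinearMap.ker g) ⧸ (LinearMap.range f).comap (LinearMap.ker g).subtype)) := by
  have hFK : LinearMap.range f ≤ LinearMap.ker g := by
    rintro v ⟨x, rfl⟩
    have : g (f x) = 0 := congrFun (congrArg DFunLike.coe hgf) x
    simpa using this
  have h1 := aux_ker_eq f g
  have h2 : finrank ℝ (LinearMap.range f) +
      finrank ℝ ((LinearMap.range f)ᗮ ⊓ LinearMap.ker g : Submodule ℝ V)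
      = finrank ℝ (LinearMap.ker g) :=
    Submodule.finrank_add_inf_finrank_orthogonal hFK
  have h3 : finrank ℝ (LinearMap.ker (LinearMap.adjoint g ∘ₗ g + f ∘ₗ LinearMap.adjoint f))
      = finrank ℝ ((LinearMap.range f)ᗮ ⊓ LinearMap.ker g : Submodule ℝ V) := by
    rw [h1, inf_comm]
  have h4 : finrank ℝ ((LinearMap.range f).comap (LinearMap.ker g).subtype)
      = finrank ℝ (LinearMap.range f) :=
    (Submodule.comapSubtypeEquivOfLe hFK).finrank_eq
  have h5 := Submodule.finrank_quotient_add_finrank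
    ((LinearMap.range f).comap (LinearMap.ker g).subtype)
  exact ⟨LinearEquiv.ofFinrankEq _ _ (by omega)⟩
end

section
/- Let U, V, W be finite-dimensional real inner product spaces and let f : U → V and g : V → W be linear maps with g ∘ f = 0. Then V decomposes as an internal orthogonal direct sum V = im f ⊕ ker(g* g + f f*) ⊕ im g*. -/
open LinearMap

lemma ker_laplacian
    {U V W : Type*}
    [NormedAddCommGroup U] [InnerProductSpace ℝ U] [FiniteDimensional ℝ U]
    [NormedAddCommGroup V] [InnerProductSpace ℝ V] [FiniteDimensional ℝ V]
    [NormedAddCommGroup W] [InnerProductSpace ℝ W] [FiniteDimensional ℝ W]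
    (f : U →ₗ[ℝ] V) (g : V →ₗ[ℝ] W) {y : V}
    (hy : (LinearMap.adjoint g ∘ₗ g + f ∘ₗ LinearMap.adjoint f) y = 0) :
    g y = 0 ∧ LinearMap.adjoint f y = 0 := by
  have h : (inner ℝ ((LinearMap.adjoint g ∘ₗ g + f ∘ₗ LinearMap.adjoint f) y) y : ℝ) = 0 := by
    rw [hy, inner_zero_left]
  simp only [LinearMap.add_apply, LinearMap.comp_apply, inner_add_left,
    LinearMap.adjoint_inner_left] at h
  rw [← LinearMap.adjoint_inner_right f,
    real_inner_self_eq_norm_sq, real_inner_self_eq_norm_sq] at h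
  have h1 : ‖g y‖ = 0 ∧ ‖LinearMap.adjoint f y‖ = 0 := by
    constructor <;> nlinarith [norm_nonneg (g y), norm_nonneg (LinearMap.adjoint f y)]
  exact ⟨norm_eq_zero.mp h1.1, norm_eq_zero.mp h1.2⟩

/-- Hodge decomposition: for finite-dimensional real inner product spaces and linear maps
`f : U → V`, `g : V → W` with `g ∘ f = 0`, the space `V` is the internal orthogonal direct
sum of `im f`, `ker (g* g + f f*)` and `im g*`. -/
theorem hodge_decomposition
    {U V W : Type*}
    [NormedAddCommGroup U] [InnerProductSpace ℝ U] [FiniteDimensional ℝ U]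
    [NormedAddCommGroup V] [InnerProductSpace ℝ V] [FiniteDimensional ℝ V]
    [NormedAddCommGroup W] [InnerProductSpace ℝ W] [FiniteDimensional ℝ W]
    (f : U →ₗ[ℝ] V) (g : V →ₗ[ℝ] W) (hgf : g ∘ₗ f = 0) :
    (∀ x ∈ LinearMap.range f,
      ∀ y ∈ LinearMap.ker (LinearMap.adjoint g ∘ₗ g + f ∘ₗ LinearMap.adjoint f),
        (inner ℝ x y : ℝ) = 0) ∧
    (∀ x ∈ LinearMap.range f, ∀ y ∈ LinearMap.range (LinearMap.adjoint g),
        (inner ℝ x y : ℝ) = 0) ∧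
    (∀ x ∈ LinearMap.ker (LinearMap.adjoint g ∘ₗ g + f ∘ₗ LinearMap.adjoint f),
      ∀ y ∈ LinearMap.range (LinearMap.adjoint g), (inner ℝ x y : ℝ) = 0) ∧
    (LinearMap.range f ⊔
      LinearMap.ker (LinearMap.adjoint g ∘ₗ g + f ∘ₗ LinearMap.adjoint f) ⊔
      LinearMap.range (LinearMap.adjoint g) = ⊤) := by
  refine ⟨?_, ?_, ?_, ?_⟩
  · rintro x ⟨u, rfl⟩ y hy
    have := (ker_laplacian f g (LinearMap.mem_ker.mp hy)).2
    rw [← LinearMap.adjoint_inner_right, this, inner_zero_right]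
  · rintro x ⟨u, rfl⟩ y ⟨w, rfl⟩
    rw [LinearMap.adjoint_inner_right, ← LinearMap.comp_apply, hgf]
    simp
  · rintro x hx y ⟨w, rfl⟩
    have := (ker_laplacian f g (LinearMap.mem_ker.mp hx)).1
    rw [LinearMap.adjoint_inner_right, this, inner_zero_left]
  · have hK : (LinearMap.range f ⊔ LinearMap.range (LinearMap.adjoint g))ᗮ ≤
        LinearMap.ker (LinearMap.adjoint g ∘ₗ g + f ∘ₗ LinearMap.adjoint f) := by
      intro v hv
      rw [Submodule.mem_orthogonal] at hv
      have hf : LinearMap.adjoint f v = 0 := by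
        apply ext_inner_right ℝ
        intro u
        rw [LinearMap.adjoint_inner_left, inner_zero_left, real_inner_comm]
        exact hv (f u) (Submodule.mem_sup_left ⟨u, rfl⟩)
      have hg : g v = 0 := by
        apply ext_inner_right ℝ
        intro w
        rw [inner_zero_left, ← LinearMap.adjoint_inner_right, real_inner_comm]
        exact hv _ (Submodule.mem_sup_right ⟨w, rfl⟩)
      simp [LinearMap.mem_ker, hf, hg]
    have htop := Submodule.sup_orthogonal_of_hasOrthogonalProjection
      (K := LinearMap.range f ⊔ LinearMap.range (LinearMap.adjoint g))
    rw [eq_top_iff, ← htop]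
    apply sup_le
    · exact sup_le (le_sup_of_le_left le_sup_left) le_sup_right
    · exact hK.trans (le_sup_of_le_left le_sup_right)
end

section
/- Persistent Hodge theorem: Let (V, d^V) ⊆ (W, d^W) be finite-dimensional inner product chain complexes, where V_q ⊆ W_q for each q, the inner product on V_q is inherited from W_q, and d^V_q is the restriction of d^W_q. Fix q, let Θ = {w ∈ W_{q+1} : d^W_{q+1} w ∈ V_q}, let D : Θ → V_q be the corestriction of d^W_{q+1}, and let Δ = (d^V_q)* d^V_q + D D* : V_q → V_q. Then ker Δ is isomorphic to ker d^V_q / (im d^W_{q+1} ∩ V_q). -/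
open Submodule LinearMap

lemma hodge_aux {E F G : Type*}
    [NormedAddCommGroup E] [InnerProductSpace ℝ E] [FiniteDimensional ℝ E]
    [NormedAddCommGroup F] [InnerProductSpace ℝ F] [FiniteDimensional ℝ F]
    [NormedAddCommGroup G] [InnerProductSpace ℝ G] [FiniteDimensional ℝ G]
    (A : E →ₗ[ℝ] F) (B : G →ₗ[ℝ] E) (hAB : A ∘ₗ B = 0) :
    Nonempty ((ker (A.adjoint ∘ₗ A + B ∘ₗ B.adjoint)) ≃ₗ[ℝ]
      ((ker A) ⧸ (range B).comap (ker A).subtype)) := by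
  have hrange : range B ≤ ker A := by
    rintro x ⟨g, rfl⟩
    exact congrFun (congrArg DFunLike.coe hAB) g
  -- kernel of Laplacian = ker A ⊓ ker B.adjoint
  have hker : ker (A.adjoint ∘ₗ A + B ∘ₗ B.adjoint) = ker A ⊓ (range B)ᗮ := by
    ext x
    simp only [mem_ker, LinearMap.add_apply, comp_apply, Submodule.mem_inf, Submodule.mem_orthogonal]
    constructor
    · intro hx
      have h0 : (inner ℝ x (A.adjoint (A x) + B (B.adjoint x)) : ℝ) = 0 := by
        rw [hx]; simp
      rw [inner_add_right, LinearMap.adjoint_inner_right] at h0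
      rw [← LinearMap.adjoint_inner_left B] at h0
      have hA : A x = 0 := by
        have := add_eq_zero_iff_of_nonneg (real_inner_self_nonneg) (real_inner_self_nonneg) |>.mp h0
        exact inner_self_eq_zero.mp this.1
      have hB : B.adjoint x = 0 := by
        have := add_eq_zero_iff_of_nonneg (real_inner_self_nonneg) (real_inner_self_nonneg) |>.mp h0
        exact inner_self_eq_zero.mp this.2
      refine ⟨hA, ?_⟩
      rintro u ⟨g, rfl⟩
      rw [real_inner_comm, ← LinearMap.adjoint_inner_left, hB, inner_zero_left]
    · rintro ⟨hA, hB⟩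
      have hB' : B.adjoint x = 0 := by
        have : (inner ℝ (B.adjoint x) (B.adjoint x) : ℝ) = 0 := by
          rw [LinearMap.adjoint_inner_left, real_inner_comm]
          exact hB _ ⟨_, rfl⟩
        exact inner_self_eq_zero.mp this
      rw [hA, hB', map_zero, map_zero, add_zero]
  set K := ker A
  set S : Submodule ℝ K := (range B).comap K.subtype
  have hcompl : IsCompl S Sᗮ := Submodule.isCompl_orthogonal_of_hasOrthogonalProjection
  have hmap : Submodule.map K.subtype Sᗮ = K ⊓ (range B)ᗮ := by
    ext x
    simp only [Submodule.mem_map, Submodule.mem_inf, Submodule.mem_orthogonal]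
    constructor
    · rintro ⟨⟨y, hy⟩, hyo, rfl⟩
      refine ⟨hy, ?_⟩
      intro u hu
      have := hyo ⟨u, hrange hu⟩ hu
      simpa [Submodule.coe_inner] using this
    · rintro ⟨hxK, hx⟩
      exact ⟨⟨x, hxK⟩, fun u hu => by simpa [Submodule.coe_inner] using hx u hu, rfl⟩
  exact ⟨(LinearEquiv.ofEq _ _ (hker.trans hmap.symm)).trans
    (((Submodule.equivMapOfInjective K.subtype (Submodule.injective_subtype K) Sᗮ).symm).trans
      ((S.quotientEquivOfIsCompl Sᗮ hcompl).symm))⟩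


/-- Persistent Hodge theorem.  Let `(V, dV) ⊆ (W, dW)` be a pair of finite-dimensional real
inner product chain complexes (displayed here in degrees `q+1, q, q-1` with ambient spaces
`W1, W0, Wm` and subspaces `V1 ≤ W1`, `V0 ≤ W0`, `Vm ≤ Wm`, the boundary of the smaller
complex being the restriction of that of the larger one).  With
`Θ = {w ∈ W_{q+1} : dW w ∈ V_q}`, `D : Θ → V_q` the corestriction of `dW_{q+1}`, and
`Δ = (dV_q)* dV_q + D D*`, the kernel of `Δ` is isomorphic to
`ker dV_q / (im dW_{q+1} ∩ V_q)`. -/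
theorem persistent_hodge_theorem
    {W1 W0 Wm : Type*}
    [NormedAddCommGroup W1] [InnerProductSpace ℝ W1] [FiniteDimensional ℝ W1]
    [NormedAddCommGroup W0] [InnerProductSpace ℝ W0] [FiniteDimensional ℝ W0]
    [NormedAddCommGroup Wm] [InnerProductSpace ℝ Wm] [FiniteDimensional ℝ Wm]
    (d1 : W1 →ₗ[ℝ] W0) (d0 : W0 →ₗ[ℝ] Wm) (hdd : d0 ∘ₗ d1 = 0)
    (V1 : Submodule ℝ W1) (V0 : Submodule ℝ W0) (Vm : Submodule ℝ Wm)
    (hd1 : ∀ x ∈ V1, d1 x ∈ V0) (hd0 : ∀ x ∈ V0, d0 x ∈ Vm) :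
    Nonempty
      ((LinearMap.ker
          ((LinearMap.adjoint (d0.restrict hd0)) ∘ₗ (d0.restrict hd0) +
            (LinearMap.codRestrict V0 (d1 ∘ₗ (Submodule.comap d1 V0).subtype)
                (fun c => c.2)) ∘ₗ
              (LinearMap.adjoint
                (LinearMap.codRestrict V0 (d1 ∘ₗ (Submodule.comap d1 V0).subtype)
                  (fun c => c.2))))) ≃ₗ[ℝ]
        ((LinearMap.ker (d0.restrict hd0)) ⧸
          ((LinearMap.range d1 ⊓ V0).comap V0.subtype).comap
            (LinearMap.ker (d0.restrict hd0)).subtype)) := by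
  set A := d0.restrict hd0
  set B := LinearMap.codRestrict V0 (d1 ∘ₗ (Submodule.comap d1 V0).subtype) (fun c => c.2)
  have hAB : A ∘ₗ B = 0 := by
    ext ⟨x, hx⟩
    have : d0 (d1 x) = 0 := congrFun (congrArg DFunLike.coe hdd) x
    simp [A, B, LinearMap.restrict_apply]; exact this
  have hrg : LinearMap.range B = (LinearMap.range d1 ⊓ V0).comap V0.subtype := by
    ext ⟨v, hv⟩
    simp only [LinearMap.mem_range, Submodule.mem_comap, Submodule.mem_inf]
    constructor
    · rintro ⟨⟨w, hw⟩, h⟩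
      have : d1 w = v := congrArg Subtype.val h
      exact ⟨⟨w, this⟩, hv⟩
    · rintro ⟨⟨w, hw⟩, -⟩
      exact ⟨⟨w, by simpa [hw] using hv⟩, by ext; simp [B]; exact hw⟩
  obtain ⟨e⟩ := hodge_aux A B hAB
  exact ⟨e.trans (Submodule.quotEquivOfEq _ _ (by rw [hrg]))⟩
end

section
/- Persistent Hodge decomposition: In the setting of the persistent Hodge theorem, V_q decomposes as an internal orthogonal direct sum V_q = im D ⊕ ker Δ ⊕ im (d^V_q)*, where D is the persistent boundary operator and Δ = (d^V_q)* d^V_q + D D* is the persistent Laplacian. -/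
/-- Persistent Hodge decomposition.  In the setting of the persistent Hodge theorem, with
`Θ = {w ∈ W_{q+1} : dW w ∈ V_q}`, `D : Θ → V_q` the corestriction of `dW_{q+1}` and
`Δ = (dV_q)* dV_q + D D*` the persistent Laplacian, the space `V_q` is the internal
orthogonal direct sum `im D ⊕ ker Δ ⊕ im (dV_q)*`. -/
theorem persistent_hodge_decomposition
    {W1 W0 Wm : Type*}
    [NormedAddCommGroup W1] [InnerProductSpace ℝ W1] [FiniteDimensional ℝ W1]
    [NormedAddCommGroup W0] [InnerProductSpace ℝ W0] [FiniteDimensional ℝ W0]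
    [NormedAddCommGroup Wm] [InnerProductSpace ℝ Wm] [FiniteDimensional ℝ Wm]
    (d1 : W1 →ₗ[ℝ] W0) (d0 : W0 →ₗ[ℝ] Wm) (hdd : d0 ∘ₗ d1 = 0)
    (V1 : Submodule ℝ W1) (V0 : Submodule ℝ W0) (Vm : Submodule ℝ Wm)
    (hd1 : ∀ x ∈ V1, d1 x ∈ V0) (hd0 : ∀ x ∈ V0, d0 x ∈ Vm)
    (D : ↥(Submodule.comap d1 V0) →ₗ[ℝ] ↥V0)
    (hD : D = LinearMap.codRestrict V0 (d1 ∘ₗ (Submodule.comap d1 V0).subtype)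
      (fun c => c.2))
    (Δ : ↥V0 →ₗ[ℝ] ↥V0)
    (hΔ : Δ = (LinearMap.adjoint (d0.restrict hd0)) ∘ₗ (d0.restrict hd0) +
      D ∘ₗ LinearMap.adjoint D) :
    (∀ x ∈ LinearMap.range D, ∀ y ∈ LinearMap.ker Δ, (inner ℝ x y : ℝ) = 0) ∧
    (∀ x ∈ LinearMap.range D,
      ∀ y ∈ LinearMap.range (LinearMap.adjoint (d0.restrict hd0)), (inner ℝ x y : ℝ) = 0) ∧
    (∀ x ∈ LinearMap.ker Δ,
      ∀ y ∈ LinearMap.range (LinearMap.adjoint (d0.restrict hd0)), (inner ℝ x y : ℝ) = 0) ∧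
    (LinearMap.range D ⊔ LinearMap.ker Δ ⊔
      LinearMap.range (LinearMap.adjoint (d0.restrict hd0)) = ⊤) := by
  set B := d0.restrict hd0 with hB
  -- B ∘ D = 0
  have hBD : ∀ u, B (D u) = 0 := by
    intro u
    apply Subtype.ext
    have : d0 (d1 (u : W1)) = 0 := LinearMap.congr_fun hdd (u : W1)
    simp [hB, hD, LinearMap.restrict_apply, this]
    exact this
  -- kernel characterization
  have hker : ∀ x : V0, Δ x = 0 → B x = 0 ∧ LinearMap.adjoint D x = 0 := by
    intro x hx
    have h0 : (inner ℝ (Δ x) x : ℝ) = 0 := by rw [hx]; simp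
    have hsum : (inner ℝ (B x) (B x) : ℝ) + inner ℝ (LinearMap.adjoint D x) (LinearMap.adjoint D x) = 0 := by
      rw [hΔ] at h0
      have h1 : (inner ℝ ((LinearMap.adjoint B) (B x)) x : ℝ) = inner ℝ (B x) (B x) :=
        LinearMap.adjoint_inner_left B x (B x)
      have h2 : (inner ℝ (D (LinearMap.adjoint D x)) x : ℝ) =
          inner ℝ (LinearMap.adjoint D x) (LinearMap.adjoint D x) := by
        rw [real_inner_comm, ← LinearMap.adjoint_inner_left]
      simpa [LinearMap.add_apply, LinearMap.comp_apply, inner_add_left, h1, h2] using h0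
    have hb := real_inner_self_nonneg (x := B x)
    have hd := real_inner_self_nonneg (x := LinearMap.adjoint D x)
    constructor
    · rw [← @inner_self_eq_zero ℝ]; linarith
    · rw [← @inner_self_eq_zero ℝ]; linarith
  refine ⟨?_, ?_, ?_, ?_⟩
  · rintro x ⟨u, rfl⟩ y hy
    have h := (hker y (by simpa using hy)).2
    rw [real_inner_comm, ← LinearMap.adjoint_inner_left, h, inner_zero_left]
  · rintro x ⟨u, rfl⟩ y ⟨v, rfl⟩
    rw [LinearMap.adjoint_inner_right, hBD, inner_zero_left]
  · rintro x hx y ⟨v, rfl⟩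
    have h := (hker x (by simpa using hx)).1
    rw [LinearMap.adjoint_inner_right, h, inner_zero_left]
  · set K := LinearMap.range D ⊔ LinearMap.range (LinearMap.adjoint B) with hK
    have hKc : Kᗮ ≤ LinearMap.ker Δ := by
      intro x hx
      have hD0 : LinearMap.adjoint D x = 0 := by
        rw [← @inner_self_eq_zero ℝ, LinearMap.adjoint_inner_left, real_inner_comm]
        exact hx _ (le_sup_left (a := LinearMap.range D) ⟨_, rfl⟩)
      have hB0 : B x = 0 := by
        rw [← @inner_self_eq_zero ℝ, ← LinearMap.adjoint_inner_right, real_inner_comm]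
        exact hx _ (le_sup_right (b := LinearMap.range (LinearMap.adjoint B)) ⟨_, rfl⟩)
      simp [LinearMap.mem_ker, hΔ, hB0, hD0]
    have htop : K ⊔ Kᗮ = ⊤ := Submodule.sup_orthogonal_of_hasOrthogonalProjection
    rw [eq_top_iff, ← htop]
    apply sup_le
    · rw [hK]
      apply sup_le
      · exact le_sup_of_le_left le_sup_left
      · exact le_sup_right
    · exact le_sup_of_le_left (le_trans hKc le_sup_right)
end

section
/- Let w be a weight function on the simplices of a simplicial complex X valued in a commutative ring R with the property that w(σ) divides w(τ) whenever σ ≤ τ, and suppose quotients w(τ)/w(σ) are chosen compatibly, i.e., there is φ : {face pairs} → R with φ(τ,σ)·w(σ) = w(τ) and satisfying φ(d_iσ, d_{j−1}d_iσ) φ(σ, d_iσ) = φ(d_jσ, d_id_jσ) φ(σ, d_jσ) for all 0 ≤ i < j ≤ q. Then the weighted boundary operator ∂(σ) = Σ_{i=0}^{q} (−1)^i φ(σ, d_iσ) d_iσ on the free R-module generated by simplices satisfies ∂ ∘ ∂ = 0. -/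
/-- Chains of a simplicial complex `K` over a commutative ring `R`, modelled as the free
`R`-module on sorted vertex lists spanning a face of `K`. -/
abbrev WtChains {ι : Type*} [LinearOrder ι] (K : Set (Finset ι)) (R : Type*)
    [CommRing R] := ({l : List ι // l.Pairwise (· < ·) ∧ l.toFinset ∈ K} →₀ R)

/-- The `φ`-weighted boundary operator
`∂(σ) = Σᵢ (−1)ⁱ φ(σ, dᵢσ) dᵢσ`, on the chains of a simplicial complex `K` (required to be
closed under subsets), where `φ σ τ` is evaluated on ordered simplices presented as sorted
lists and `dᵢσ` deletes the `i`-th vertex. -/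
noncomputable def weightedBoundary {ι : Type*} [LinearOrder ι] (K : Set (Finset ι))
    (hK : ∀ s ∈ K, ∀ t ⊆ s, t ∈ K) (R : Type*) [CommRing R]
    (φ : List ι → List ι → R) :
    WtChains K R →ₗ[R] WtChains K R :=
  Finsupp.lift _ R _ (fun l => ∑ i : Fin l.1.length,
    ((-1 : R) ^ (i : ℕ) * φ l.1 (l.1.eraseIdx i)) •
      Finsupp.single
        ⟨l.1.eraseIdx i,
          ⟨l.2.1.sublist (List.eraseIdx_sublist l.1 i),
            hK l.1.toFinset l.2.2 (l.1.eraseIdx i).toFinset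
              (by
                intro x hx
                rw [List.mem_toFinset] at hx ⊢
                exact (List.eraseIdx_sublist l.1 i).subset hx)⟩⟩
        (1 : R))

section Aux

lemma eraseIdx_eraseIdx_comm {α : Type*} (l : List α) :
    ∀ (i k : ℕ), i ≤ k → (l.eraseIdx (k + 1)).eraseIdx i = (l.eraseIdx i).eraseIdx k := by
  induction l with
  | nil => simp
  | cons a t ih =>
    intro i k h
    cases i with
    | zero => cases k <;> simp [List.eraseIdx]
    | succ i' =>
      cases k with
      | zero => omega
      | succ k' => simp [List.eraseIdx, ih i' k' (by omega)]

variable {ι : Type*} [LinearOrder ι] {K : Set (Finset ι)}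
  (hK : ∀ s ∈ K, ∀ t ⊆ s, t ∈ K) {R : Type*} [CommRing R]

def dFace (x : {l : List ι // l.Pairwise (· < ·) ∧ l.toFinset ∈ K}) (i : ℕ) :
    {l : List ι // l.Pairwise (· < ·) ∧ l.toFinset ∈ K} :=
  ⟨x.1.eraseIdx i,
    ⟨x.2.1.sublist (List.eraseIdx_sublist x.1 i),
      hK x.1.toFinset x.2.2 (x.1.eraseIdx i).toFinset
        (by
          intro y hy
          rw [List.mem_toFinset] at hy ⊢
          exact (List.eraseIdx_sublist x.1 i).subset hy)⟩⟩

lemma wb_single (φ : List ι → List ι → R)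
    (x : {l : List ι // l.Pairwise (· < ·) ∧ l.toFinset ∈ K}) (r : R) :
    weightedBoundary K hK R φ (Finsupp.single x r) =
      ∑ i ∈ Finset.range x.1.length,
        (r * ((-1 : R) ^ i * φ x.1 (x.1.eraseIdx i))) •
          Finsupp.single (dFace hK x i) (1 : R) := by
  unfold weightedBoundary
  rw [Finsupp.lift_apply, Finsupp.sum_single_index (by simp)]
  show r • ∑ i : Fin x.1.length, ((-1 : R) ^ (i : ℕ) * φ x.1 (x.1.eraseIdx (i : ℕ))) •
    Finsupp.single (dFace hK x (i : ℕ)) (1 : R) = _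
  rw [Fin.sum_univ_eq_sum_range
      (fun i => ((-1 : R) ^ i * φ x.1 (x.1.eraseIdx i)) •
        Finsupp.single (dFace hK x i) (1 : R)),
    Finset.smul_sum]
  exact Finset.sum_congr rfl fun i _ => by rw [smul_smul]

end Aux

/-- For a weight function `w` on the simplices of a simplicial complex `K`, valued in a
commutative ring `R`, such that `w σ ∣ w τ` for `σ ≤ τ`, with compatibly chosen quotients
`φ(τ, σ) · w(σ) = w(τ)` satisfying
`φ(dᵢσ, d_{j−1}dᵢσ) φ(σ, dᵢσ) = φ(dⱼσ, dᵢdⱼσ) φ(σ, dⱼσ)` for `i < j`, the weighted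
boundary operator `∂(σ) = Σᵢ (−1)ⁱ φ(σ, dᵢσ) dᵢσ` satisfies `∂ ∘ ∂ = 0`. -/
theorem weightedBoundary_comp_eq_zero {ι : Type*} [LinearOrder ι] (K : Set (Finset ι))
    (hK : ∀ s ∈ K, ∀ t ⊆ s, t ∈ K) (R : Type*) [CommRing R]
    (w : Finset ι → R)
    (hdvd : ∀ s ∈ K, ∀ t ⊆ s, w t ∣ w s)
    (φ : List ι → List ι → R)
    (hφw : ∀ l : List ι, l.Pairwise (· < ·) → l.toFinset ∈ K →
      ∀ i < l.length, φ l (l.eraseIdx i) * w (l.eraseIdx i).toFinset = w l.toFinset)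
    (hcompat : ∀ l : List ι, l.Pairwise (· < ·) → l.toFinset ∈ K →
      ∀ i j : ℕ, i < j → j < l.length →
        φ (l.eraseIdx i) ((l.eraseIdx i).eraseIdx (j - 1)) * φ l (l.eraseIdx i) =
          φ (l.eraseIdx j) ((l.eraseIdx j).eraseIdx i) * φ l (l.eraseIdx j)) :
    (weightedBoundary K hK R φ) ∘ₗ (weightedBoundary K hK R φ) = 0 := by
  apply Finsupp.lhom_ext
  intro σ r
  rw [LinearMap.comp_apply, wb_single, map_sum]
  simp only [map_smul, wb_single, LinearMap.zero_apply]
  have hlen : ∀ i ∈ Finset.range σ.1.length,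
      (dFace (K := K) hK σ i).1.length = σ.1.length - 1 := by
    intro i hi
    simp [dFace, List.length_eraseIdx, Finset.mem_range.1 hi]
  set n := σ.1.length with hn
  clear_value n
  calc ∑ i ∈ Finset.range n,
        (r * ((-1 : R) ^ i * φ σ.1 (σ.1.eraseIdx i))) •
          ∑ k ∈ Finset.range (dFace (K := K) hK σ i).1.length,
            ((1 : R) * ((-1 : R) ^ k * φ (dFace (K := K) hK σ i).1
              ((dFace (K := K) hK σ i).1.eraseIdx k))) •
              Finsupp.single (dFace hK (dFace hK σ i) k) (1 : R)
      = ∑ p ∈ Finset.range n ×ˢ Finset.range (n - 1),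
          ((r * ((-1 : R) ^ p.1 * φ σ.1 (σ.1.eraseIdx p.1))) *
            ((-1 : R) ^ p.2 * φ (σ.1.eraseIdx p.1)
              ((σ.1.eraseIdx p.1).eraseIdx p.2))) •
            Finsupp.single (dFace hK (dFace hK σ p.1) p.2) (1 : R) := by
        rw [Finset.sum_product]
        refine Finset.sum_congr rfl fun i hi => ?_
        rw [hlen i hi, Finset.smul_sum]
        refine Finset.sum_congr rfl fun k _ => ?_
        rw [smul_smul, one_mul]
        rfl
    _ = 0 := by
        rcases n with _ | m
        · simp
        · simp only [Nat.add_sub_cancel]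
          apply Finset.sum_involution
            (g := fun p _ => if p.1 ≤ p.2 then (p.2 + 1, p.1) else (p.2, p.1 - 1))
          · rintro ⟨i, k⟩ hp
            simp only [Finset.mem_product, Finset.mem_range] at hp
            by_cases h : i ≤ k
            · simp only [if_pos h]
              rw [show dFace hK (dFace hK σ (k + 1)) i = dFace hK (dFace hK σ i) k from
                Subtype.ext (eraseIdx_eraseIdx_comm σ.1 i k h), ← add_smul]
              convert zero_smul R _
              have key := hcompat σ.1 σ.2.1 σ.2.2 i (k + 1) (by omega) (by omega)
              simp only [Nat.add_sub_cancel, dFace] at key ⊢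
              linear_combination (r * (-1 : R) ^ (i + k)) * key
            · simp only [if_neg h]
              obtain ⟨p, rfl⟩ : ∃ p, i = p + 1 := ⟨i - 1, by omega⟩
              simp only [Nat.add_sub_cancel]
              rw [show dFace hK (dFace hK σ (p + 1)) k = dFace hK (dFace hK σ k) p from
                Subtype.ext (eraseIdx_eraseIdx_comm σ.1 k p (by omega)), ← add_smul]
              convert zero_smul R _
              have key := hcompat σ.1 σ.2.1 σ.2.2 k (p + 1) (by omega) (by omega)
              simp only [Nat.add_sub_cancel, dFace] at key ⊢
              linear_combination (r * (-1 : R) ^ (p + k)) * key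
          · rintro ⟨i, k⟩ hp _
            simp only [Finset.mem_product, Finset.mem_range] at hp
            dsimp only
            split_ifs with h <;>
              · simp only [ne_eq, Prod.mk.injEq, not_and]
                omega
          · rintro ⟨i, k⟩ hp
            simp only [Finset.mem_product, Finset.mem_range] at hp
            dsimp only
            by_cases h : i ≤ k
            · rw [if_pos h, if_neg (show ¬ k + 1 ≤ i by omega)]
              show (i, k + 1 - 1) = (i, k)
              simp
            · rw [if_neg h, if_pos (show k ≤ i - 1 by omega)]
              show (i - 1 + 1, k) = (i, k)
              simp only [Prod.mk.injEq, and_true]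
              omega
          · rintro ⟨i, k⟩ hp
            simp only [Finset.mem_product, Finset.mem_range] at hp
            dsimp only
            by_cases h : i ≤ k
            · rw [if_pos h]
              simp only [Finset.mem_product, Finset.mem_range]
              show k + 1 < m + 1 ∧ i < m
              omega
            · rw [if_neg h]
              simp only [Finset.mem_product, Finset.mem_range]
              show k < m + 1 ∧ i - 1 < m
              omega
end
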